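/- Let f be a nonnegative submodular function on V, let k ∈ ℕ, τ > 0, and let S* ⊆ V with |S*| ≤ k and f(S*) = OPT. Let S₁, S₂ ⊆ V be disjoint sets such that: (i) for every v ∈ V \ S₁, f(S₁ ∪ {v}) − f(S₁) < τ; (ii) for every v ∈ (V \ S₁) \ S₂, f(S₂ ∪ {v}) − f(S₂) < τ; and (iii) f(S₁ ∩ S*) < (τk)/(2α) for some α > 0. Then f(S₁) + f(S₂) ≥ OPT − (2 + 1/(2α)) · τ · k. -/

import Mathlib

lemma marg_sum {V : Type*} [DecidableEq V] (f : Finset V → ℝ)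
    (hsub : ∀ A B : Finset V, f (A ∪ B) + f (A ∩ B) ≤ f A + f B)
    (S T : Finset V) :
    f (S ∪ T) ≤ f S + ∑ v ∈ T \ S, (f (S ∪ {v}) - f S) := by
  induction T using Finset.induction with
  | empty => simp
  | @insert a T ha ih =>
    by_cases haS : a ∈ S
    · have h1 : S ∪ insert a T = S ∪ T := by
        rw [Finset.union_insert, Finset.insert_eq_self.mpr (Finset.mem_union_left T haS)]
      have h2 : insert a T \ S = T \ S := Finset.insert_sdiff_of_mem T haS
      rw [h1, h2]; exact ih
    · have hmem : a ∉ T \ S := by simp [ha]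
      rw [Finset.insert_sdiff_of_notMem _ haS, Finset.sum_insert hmem]
      have h1 : (S ∪ T) ∪ (S ∪ {a}) = S ∪ insert a T := by
        ext x; simp; tauto
      have h2 : (S ∪ T) ∩ (S ∪ {a}) = S := by
        ext x; simp
        constructor
        · rintro ⟨h | h, rfl | h'⟩ <;> tauto
        · tauto
      have := hsub (S ∪ T) (S ∪ {a})
      rw [h1, h2] at this
      linarith

theorem two_threshold_sets_bound
    {V : Type*} [Fintype V] [DecidableEq V] (f : Finset V → ℝ)
    (hnn : ∀ A : Finset V, 0 ≤ f A)
    (hsub : ∀ A B : Finset V, f (A ∪ B) + f (A ∩ B) ≤ f A + f B)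
    (k : ℕ) (τ α : ℝ) (hτ : 0 < τ) (hα : 0 < α)
    (Sstar : Finset V) (hcard : Sstar.card ≤ k)
    (OPT : ℝ) (hOPT : f Sstar = OPT)
    (S₁ S₂ : Finset V) (hdisj : Disjoint S₁ S₂)
    (h1 : ∀ v : V, v ∉ S₁ → f (S₁ ∪ {v}) - f S₁ < τ)
    (h2 : ∀ v : V, v ∉ S₁ → v ∉ S₂ → f (S₂ ∪ {v}) - f S₂ < τ)
    (h3 : f (S₁ ∩ Sstar) < τ * k / (2 * α)) :
    f S₁ + f S₂ ≥ OPT - (2 + 1 / (2 * α)) * τ * k := by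
  have hd := Finset.disjoint_left.mp hdisj
  -- Bound 1: f(S₁ ∪ S*) ≤ f S₁ + τ k
  have hsum1 : ∑ v ∈ Sstar \ S₁, (f (S₁ ∪ {v}) - f S₁) ≤ (Sstar \ S₁).card • τ :=
    Finset.sum_le_card_nsmul _ _ τ (fun v hv => by
      have := h1 v (Finset.mem_sdiff.mp hv).2; linarith)
  have hc1 : ((Sstar \ S₁).card : ℝ) ≤ (k : ℝ) := by
    exact_mod_cast le_trans (Finset.card_le_card (Finset.sdiff_subset)) hcard
  have hA : f (S₁ ∪ Sstar) ≤ f S₁ + τ * k := by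
    have := marg_sum f hsub S₁ Sstar
    rw [nsmul_eq_mul] at hsum1
    nlinarith [hτ.le]
  -- Bound 2: f(S₂ ∪ (S* \ S₁)) ≤ f S₂ + τ k
  have hsum2 : ∑ v ∈ (Sstar \ S₁) \ S₂, (f (S₂ ∪ {v}) - f S₂) ≤ ((Sstar \ S₁) \ S₂).card • τ :=
    Finset.sum_le_card_nsmul _ _ τ (fun v hv => by
      have hv' := Finset.mem_sdiff.mp hv
      have := h2 v (Finset.mem_sdiff.mp hv'.1).2 hv'.2; linarith)
  have hc2 : (((Sstar \ S₁) \ S₂).card : ℝ) ≤ (k : ℝ) := by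
    exact_mod_cast le_trans (Finset.card_le_card
      (le_trans Finset.sdiff_subset Finset.sdiff_subset)) hcard
  have hB : f (S₂ ∪ (Sstar \ S₁)) ≤ f S₂ + τ * k := by
    have := marg_sum f hsub S₂ (Sstar \ S₁)
    rw [nsmul_eq_mul] at hsum2
    nlinarith [hτ.le]
  -- Combine via submodularity
  have hinter : (S₁ ∪ Sstar) ∩ (S₂ ∪ (Sstar \ S₁)) = Sstar \ S₁ := by
    ext x
    simp only [Finset.mem_inter, Finset.mem_union, Finset.mem_sdiff]
    constructor
    · rintro ⟨h | h, h2' | ⟨hs, hn⟩⟩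
      · exact absurd (hd h) (by simpa using h2')
      · exact ⟨hs, hn⟩
      · exact ⟨h, fun hx => hd hx h2'⟩
      · exact ⟨hs, hn⟩
    · rintro ⟨hs, hn⟩; exact ⟨Or.inr hs, Or.inr ⟨hs, hn⟩⟩
  have hC := hsub (S₁ ∪ Sstar) (S₂ ∪ (Sstar \ S₁))
  rw [hinter] at hC
  have hC' := hnn ((S₁ ∪ Sstar) ∪ (S₂ ∪ (Sstar \ S₁)))
  -- f(S* \ S₁) ≥ OPT − f(S₁ ∩ S*)
  have hu : (Sstar \ S₁) ∪ (S₁ ∩ Sstar) = Sstar := by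
    ext x; simp; tauto
  have hi : (Sstar \ S₁) ∩ (S₁ ∩ Sstar) = ∅ := by
    ext x; simp; tauto
  have hD := hsub (Sstar \ S₁) (S₁ ∩ Sstar)
  rw [hu, hi] at hD
  have hD' := hnn (∅ : Finset V)
  have hk : (0 : ℝ) ≤ (k : ℝ) := Nat.cast_nonneg k
  have hkey : τ * k / (2 * α) ≤ 1 / (2 * α) * τ * k := by
    rw [div_eq_mul_inv]; ring_nf; rfl
  nlinarith [hnn Sstar]
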